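/- Let A, B, X be finite sets of real numbers with |X| ≤ |A||B|. Then the sum over x ∈ X of the additive energy E⁺(A, xB) is O(|A|^{3/2}|B|^{3/2}|X|^{1/2}), where xB = {xb : b ∈ B} and E⁺(A,C) is the number of quadruples (a1,c1,a2,c2) ∈ A×C×A×C with a1 + c1 = a2 + c2. -/

import Mathlib

open Finset

namespace Stmt7

def phi (x : ℝ) : ℝ × ℝ → ℝ := fun p => p.1 + x * p.2

noncomputable def Q (x : ℝ) (A B : Finset ℝ) : ℕ :=
  (((A ×ˢ B) ×ˢ (A ×ˢ B)).filter (fun q => phi x q.1 = phi x q.2)).card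

lemma energy_eq_sum_sq {α β : Type*} [DecidableEq α] [DecidableEq β] (T : Finset α) (f : α → β) :
    ((T ×ˢ T).filter (fun q => f q.1 = f q.2)).card
      = ∑ c ∈ T.image f, ((T.filter (fun t => f t = c)).card)^2 := by
  have h : (T ×ˢ T).filter (fun q => f q.1 = f q.2)
      = (T.image f).biUnion (fun c => (T.filter (fun t => f t = c)) ×ˢ (T.filter (fun t => f t = c))) := by
    ext ⟨p, q⟩
    simp only [mem_filter, mem_product, mem_biUnion, mem_image]
    constructor
    · rintro ⟨⟨hp, hq⟩, he⟩
      exact ⟨f q, ⟨q, hq, rfl⟩, ⟨hp, he⟩, hq, rfl⟩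
    · rintro ⟨c, _, ⟨hp, hpc⟩, hq, hqc⟩
      exact ⟨⟨hp, hq⟩, by rw [hpc, hqc]⟩
  rw [h, card_biUnion]
  · exact Finset.sum_congr rfl fun c _ => by rw [card_product, sq]
  · intro c _ d _ hcd
    simp only [disjoint_left]
    rintro ⟨p, q⟩ hp hq
    simp only [mem_product, mem_filter] at hp hq
    exact hcd (hp.1.2 ▸ hq.1.2)

lemma chain_card_le (r : ℕ) (S : Finset (ℕ × ℕ))
    (hcomp : ∀ p ∈ S, ∀ q ∈ S, (p.1 ≤ q.1 ∧ p.2 ≤ q.2) ∨ (q.1 ≤ p.1 ∧ q.2 ≤ p.2))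
    (hb : ∀ p ∈ S, p.1 < r ∧ p.2 < r) : S.card ≤ 2 * r := by
  have := card_le_card_of_injOn (fun p : ℕ × ℕ => p.1 + p.2)
    (t := range (2 * r)) (s := S)
    (fun p hp => by have := hb p hp; simp only [Finset.mem_coe, mem_range]; omega)
    (by
      intro p hp q hq hpq
      simp only [Finset.mem_coe] at hp hq
      have hpq' : p.1 + p.2 = q.1 + q.2 := hpq
      rcases hcomp p hp q hq with ⟨h1, h2⟩ | ⟨h1, h2⟩ <;>
        exact Prod.ext (by omega) (by omega))
  simpa using this

lemma antichain_card_le (r : ℕ) (S : Finset (ℕ × ℕ))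
    (hcomp : ∀ p ∈ S, ∀ q ∈ S, (p.1 ≤ q.1 ∧ q.2 ≤ p.2) ∨ (q.1 ≤ p.1 ∧ p.2 ≤ q.2))
    (hb : ∀ p ∈ S, p.1 < r ∧ p.2 < r) : S.card ≤ 2 * r := by
  have := card_le_card_of_injOn (fun p : ℕ × ℕ => p.1 + (r - p.2))
    (t := range (2 * r)) (s := S)
    (fun p hp => by have := hb p hp; simp only [Finset.mem_coe, mem_range]; omega)
    (by
      intro p hp q hq hpq
      simp only [Finset.mem_coe] at hp hq
      have hpq' : p.1 + (r - p.2) = q.1 + (r - q.2) := hpq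
      have h1 := hb p hp; have h2 := hb q hq
      rcases hcomp p hp q hq with ⟨h3, h4⟩ | ⟨h3, h4⟩ <;>
        exact Prod.ext (by omega) (by omega))
  simpa using this

lemma blocks (A : Finset ℝ) (r : ℕ) (hr : 0 < r) :
    ∃ u : ℝ → ℕ, Monotone u ∧ (∀ t ∈ A, u t < r) ∧
      (∀ i, (A.filter (fun t => u t = i)).card ≤ A.card / r + 1) := by
  classical
  set k := A.card / r + 1 with hk
  have hk0 : 0 < k := Nat.succ_pos _
  set rank : ℝ → ℕ := fun t => (A.filter (fun y => y < t)).card with hrank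
  have rank_mono : Monotone rank := by
    intro t t' h
    apply card_le_card
    intro y hy
    simp only [mem_filter] at hy ⊢
    exact ⟨hy.1, lt_of_lt_of_le hy.2 h⟩
  have rank_lt : ∀ t ∈ A, rank t < A.card := by
    intro t ht
    apply card_lt_card
    constructor
    · exact filter_subset _ _
    · intro hsub
      have := hsub ht
      simp only [mem_filter] at this
      exact absurd this.2 (lt_irrefl t)
  have rank_strict : ∀ t ∈ A, ∀ t' ∈ A, t < t' → rank t < rank t' := by
    intro t ht t' ht' htt
    apply card_lt_card
    constructor
    · intro y hy
      simp only [mem_filter] at hy ⊢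
      exact ⟨hy.1, lt_trans hy.2 htt⟩
    · intro hsub
      have := hsub (mem_filter.2 ⟨ht, htt⟩)
      simp only [mem_filter] at this
      exact absurd this.2 (lt_irrefl t)
  refine ⟨fun t => rank t / k, ?_, ?_, ?_⟩
  · exact fun t t' h => Nat.div_le_div_right (rank_mono h)
  · intro t ht
    have hA : A.card < k * r := (Nat.div_lt_iff_lt_mul hr).1 (hk ▸ Nat.lt_succ_self _)
    have hA' : A.card < r * k := by rwa [Nat.mul_comm] at hA
    exact (Nat.div_lt_iff_lt_mul hk0).2 (lt_trans (rank_lt t ht) hA')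
  · intro i
    have := card_le_card_of_injOn rank
      (t := Finset.Ico (i * k) (i * k + k)) (s := A.filter (fun t => rank t / k = i))
      (by
        intro t ht
        simp only [Finset.mem_coe, mem_filter] at ht
        have h4 : i * k ≤ rank t := (Nat.le_div_iff_mul_le hk0).1 (le_of_eq ht.2.symm)
        have h5 : rank t < (i + 1) * k := (Nat.div_lt_iff_lt_mul hk0).1 (by rw [ht.2]; exact Nat.lt_succ_self i)
        have h6 : (i + 1) * k = i * k + k := by ring
        simp only [Finset.mem_coe, mem_Ico]
        omega)
      (by
        intro p hp q hq hpq
        simp only [Finset.coe_filter, Set.mem_setOf_eq, Finset.mem_coe, mem_filter] at hp hq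
        by_contra hne
        rcases lt_or_gt_of_ne hne with h | h
        · exact absurd hpq (Nat.ne_of_lt (rank_strict p hp.1 q hq.1 h))
        · exact absurd hpq.symm (Nat.ne_of_lt (rank_strict q hq.1 p hp.1 h)))
    calc (A.filter (fun t => rank t / k = i)).card ≤ (Finset.Ico (i * k) (i * k + k)).card := this
      _ = k := by rw [Nat.card_Ico]; omega

noncomputable def fib (x : ℝ) (A B : Finset ℝ) (c : ℝ) : ℕ :=
  ((A ×ˢ B).filter (fun p => phi x p = c)).card

lemma Q_eq_sum (x : ℝ) (A B : Finset ℝ) :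
    Q x A B = ∑ c ∈ (A ×ˢ B).image (phi x), (fib x A B c)^2 :=
  energy_eq_sum_sq _ _

lemma cells_bound (x : ℝ) (A B : Finset ℝ) (r : ℕ) (u v : ℝ → ℕ)
    (hu : Monotone u) (hv : Monotone v)
    (huA : ∀ t ∈ A, u t < r) (hvB : ∀ t ∈ B, v t < r) :
    Q x A B ≤ 2 * r * ∑ i ∈ range r, ∑ j ∈ range r,
      Q x (A.filter (fun t => u t = i)) (B.filter (fun t => v t = j)) := by
  classical
  set T := A ×ˢ B with hT
  set ψ : ℝ × ℝ → ℕ × ℕ := fun p => (u p.1, v p.2) with hψ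
  have hident : ∀ (c : ℝ) (e : ℕ × ℕ),
      (T.filter (fun p => phi x p = c)).filter (fun p => ψ p = e)
      = ((A.filter (fun t => u t = e.1)) ×ˢ (B.filter (fun t => v t = e.2))).filter
          (fun p => phi x p = c) := by
    intro c e
    ext p
    simp only [mem_filter, mem_product, hψ, Prod.ext_iff, hT]
    tauto
  have key : ∀ c ∈ T.image (phi x), (fib x A B c)^2
      ≤ 2 * r * ∑ e ∈ range r ×ˢ range r,
          (fib x (A.filter (fun t => u t = e.1)) (B.filter (fun t => v t = e.2)) c)^2 := by
    intro c _
    set F := T.filter (fun p => phi x p = c) with hF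
    set cells := F.image ψ with hcells
    have hmemF : ∀ p ∈ F, p.1 ∈ A ∧ p.2 ∈ B ∧ p.1 + x * p.2 = c := by
      intro p hp
      simp only [hF, mem_filter, hT, mem_product] at hp
      exact ⟨hp.1.1, hp.1.2, hp.2⟩
    have hdec : F.card = ∑ e ∈ cells, (F.filter (fun p => ψ p = e)).card :=
      card_eq_sum_card_fiberwise (fun p hp => mem_image_of_mem _ hp)
    have hcellcard : cells.card ≤ 2 * r := by
      have hbnd : ∀ e ∈ cells, e.1 < r ∧ e.2 < r := by
        intro e he
        obtain ⟨p, hp, rfl⟩ := mem_image.1 he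
        obtain ⟨h1, h2, _⟩ := hmemF p hp
        exact ⟨huA _ h1, hvB _ h2⟩
      rcases le_or_gt x 0 with hx | hx
      · apply chain_card_le r cells ?_ hbnd
        intro e he f hf
        obtain ⟨p, hp, rfl⟩ := mem_image.1 he
        obtain ⟨q, hq, rfl⟩ := mem_image.1 hf
        obtain ⟨_, _, hpc⟩ := hmemF p hp
        obtain ⟨_, _, hqc⟩ := hmemF q hq
        rcases le_total p.2 q.2 with h | h
        · exact Or.inl ⟨hu (by nlinarith), hv h⟩
        · exact Or.inr ⟨hu (by nlinarith), hv h⟩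
      · apply antichain_card_le r cells ?_ hbnd
        intro e he f hf
        obtain ⟨p, hp, rfl⟩ := mem_image.1 he
        obtain ⟨q, hq, rfl⟩ := mem_image.1 hf
        obtain ⟨_, _, hpc⟩ := hmemF p hp
        obtain ⟨_, _, hqc⟩ := hmemF q hq
        rcases le_total p.2 q.2 with h | h
        · exact Or.inr ⟨hu (by nlinarith), hv h⟩
        · exact Or.inl ⟨hu (by nlinarith), hv h⟩
    have hCS : (F.card)^2 ≤ cells.card * ∑ e ∈ cells, ((F.filter (fun p => ψ p = e)).card)^2 := by
      rw [hdec]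
      exact sq_sum_le_card_mul_sum_sq
    have hsub : cells ⊆ range r ×ˢ range r := by
      intro e he
      obtain ⟨p, hp, rfl⟩ := mem_image.1 he
      obtain ⟨h1, h2, _⟩ := hmemF p hp
      simp only [mem_product, mem_range]
      exact ⟨huA _ h1, hvB _ h2⟩
    have hFfib : F.card = fib x A B c := rfl
    calc (fib x A B c)^2
        ≤ cells.card * ∑ e ∈ cells, ((F.filter (fun p => ψ p = e)).card)^2 := by
          rw [← hFfib]; exact hCS
      _ ≤ 2 * r * ∑ e ∈ cells, ((F.filter (fun p => ψ p = e)).card)^2 :=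
          Nat.mul_le_mul_right _ hcellcard
      _ = 2 * r * ∑ e ∈ cells,
            (fib x (A.filter (fun t => u t = e.1)) (B.filter (fun t => v t = e.2)) c)^2 := by
          congr 1
          refine Finset.sum_congr rfl fun e _ => ?_
          rw [hF, hident c e]
          rfl
      _ ≤ 2 * r * ∑ e ∈ range r ×ˢ range r,
            (fib x (A.filter (fun t => u t = e.1)) (B.filter (fun t => v t = e.2)) c)^2 :=
          Nat.mul_le_mul_left _ (sum_le_sum_of_subset hsub)
  have step2 : ∀ e : ℕ × ℕ, ∑ c ∈ T.image (phi x),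
      (fib x (A.filter (fun t => u t = e.1)) (B.filter (fun t => v t = e.2)) c)^2
      = Q x (A.filter (fun t => u t = e.1)) (B.filter (fun t => v t = e.2)) := by
    intro e
    rw [Q_eq_sum]
    refine (Finset.sum_subset ?_ ?_).symm
    · apply image_subset_image
      intro p hp
      simp only [hT, mem_product, mem_filter] at hp ⊢
      exact ⟨hp.1.1, hp.2.1⟩
    · intro c _ hc
      have hemp : ((A.filter (fun t => u t = e.1)) ×ˢ (B.filter (fun t => v t = e.2))).filter
          (fun p => phi x p = c) = ∅ := by
        rw [Finset.filter_eq_empty_iff]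
        intro p hp hpc
        exact hc (mem_image.2 ⟨p, hp, hpc⟩)
      simp only [fib, hemp, card_empty]
      norm_num
  calc Q x A B = ∑ c ∈ T.image (phi x), (fib x A B c)^2 := Q_eq_sum x A B
    _ ≤ ∑ c ∈ T.image (phi x), 2 * r * ∑ e ∈ range r ×ˢ range r,
          (fib x (A.filter (fun t => u t = e.1)) (B.filter (fun t => v t = e.2)) c)^2 :=
        sum_le_sum key
    _ = 2 * r * ∑ e ∈ range r ×ˢ range r, ∑ c ∈ T.image (phi x),
          (fib x (A.filter (fun t => u t = e.1)) (B.filter (fun t => v t = e.2)) c)^2 := by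
        rw [← mul_sum, Finset.sum_comm]
    _ = 2 * r * ∑ e ∈ range r ×ˢ range r,
          Q x (A.filter (fun t => u t = e.1)) (B.filter (fun t => v t = e.2)) := by
        congr 1
        exact Finset.sum_congr rfl fun e _ => step2 e
    _ = 2 * r * ∑ i ∈ range r, ∑ j ∈ range r,
          Q x (A.filter (fun t => u t = i)) (B.filter (fun t => v t = j)) := by
        rw [Finset.sum_product]

lemma sum_Q_le (A B : Finset ℝ) (S : Finset ℝ) :
    ∑ x ∈ S, Q x A B ≤ S.card * (A.card * B.card) + (A.card * B.card)^2 := by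
  classical
  set T := (A ×ˢ B) ×ˢ (A ×ˢ B) with hT
  have split : ∀ x : ℝ, Q x A B
      = (T.filter (fun q => phi x q.1 = phi x q.2 ∧ q.1 = q.2)).card
        + (T.filter (fun q => phi x q.1 = phi x q.2 ∧ ¬ q.1 = q.2)).card := by
    intro x
    rw [Q, ← filter_filter, ← filter_filter]
    exact (card_filter_add_card_filter_not _).symm
  have hdiag : ∀ x : ℝ, (T.filter (fun q => phi x q.1 = phi x q.2 ∧ q.1 = q.2)).card
      ≤ A.card * B.card := by
    intro x
    have := card_le_card_of_injOn (fun q : (ℝ × ℝ) × (ℝ × ℝ) => q.1)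
      (s := T.filter (fun q => phi x q.1 = phi x q.2 ∧ q.1 = q.2)) (t := A ×ˢ B)
      (fun q hq => by
        simp only [hT, Finset.mem_coe, mem_filter, mem_product] at hq
        exact mem_product.2 ⟨hq.1.1.1, hq.1.1.2⟩)
      (by
        intro q hq q' hq' h
        have h' : q.1 = q'.1 := h
        simp only [Finset.coe_filter, Set.mem_setOf_eq, Finset.mem_coe, mem_filter] at hq hq'
        rw [Prod.ext_iff]
        exact ⟨h', by rw [← hq.2.2, ← hq'.2.2]; exact h'⟩)
    simpa [card_product] using this
  have hdisj : ∀ x ∈ S, ∀ y ∈ S, x ≠ y →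
      Disjoint (T.filter (fun q => phi x q.1 = phi x q.2 ∧ ¬ q.1 = q.2))
        (T.filter (fun q => phi y q.1 = phi y q.2 ∧ ¬ q.1 = q.2)) := by
    intro x _ y _ hxy
    rw [disjoint_left]
    intro q hqx hqy
    replace hqx := Finset.mem_filter.1 hqx
    replace hqy := Finset.mem_filter.1 hqy
    simp only [mem_filter, phi] at hqx hqy
    obtain ⟨_, e1, hne⟩ := hqx
    obtain ⟨_, e2, _⟩ := hqy
    by_cases hb : q.1.2 = q.2.2
    · rw [hb] at e1
      exact hne (Prod.ext (by linarith) hb)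
    · have hfac : (x - y) * (q.1.2 - q.2.2) = 0 := by ring_nf; nlinarith [e1, e2]
      rcases mul_eq_zero.1 hfac with h | h
      · exact hxy (by linarith)
      · exact hb (by linarith)
  have hoff : ∑ x ∈ S, (T.filter (fun q => phi x q.1 = phi x q.2 ∧ ¬ q.1 = q.2)).card
      ≤ (A.card * B.card)^2 := by
    rw [← card_biUnion hdisj]
    calc (S.biUnion fun x => T.filter (fun q => phi x q.1 = phi x q.2 ∧ ¬ q.1 = q.2)).card
        ≤ T.card := card_le_card (biUnion_subset.2 fun x _ => filter_subset _ _)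
      _ = (A.card * B.card)^2 := by rw [hT, card_product, card_product]; ring
  calc ∑ x ∈ S, Q x A B
      = ∑ x ∈ S, (T.filter (fun q => phi x q.1 = phi x q.2 ∧ q.1 = q.2)).card
        + ∑ x ∈ S, (T.filter (fun q => phi x q.1 = phi x q.2 ∧ ¬ q.1 = q.2)).card := by
        rw [← Finset.sum_add_distrib]
        exact Finset.sum_congr rfl fun x _ => split x
    _ ≤ S.card * (A.card * B.card) + (A.card * B.card)^2 := by
        refine Nat.add_le_add ?_ hoff
        calc ∑ x ∈ S, (T.filter (fun q => phi x q.1 = phi x q.2 ∧ q.1 = q.2)).card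
            ≤ ∑ _x ∈ S, (A.card * B.card) := sum_le_sum fun x _ => hdiag x
          _ = S.card * (A.card * B.card) := by rw [Finset.sum_const, smul_eq_mul]

lemma Q_le_mul_b (x : ℝ) (A B : Finset ℝ) : Q x A B ≤ (A.card * B.card) * B.card := by
  have := card_le_card_of_injOn (fun q : (ℝ × ℝ) × (ℝ × ℝ) => (q.1, q.2.2))
    (s := ((A ×ˢ B) ×ˢ (A ×ˢ B)).filter (fun q => phi x q.1 = phi x q.2)) (t := (A ×ˢ B) ×ˢ B)
    (fun q hq => by
      simp only [Finset.mem_coe, mem_filter, mem_product] at hq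
      exact mem_product.2 ⟨mem_product.2 ⟨hq.1.1.1, hq.1.1.2⟩, hq.1.2.2⟩)
    (by
      intro q hq q' hq' h
      replace hq := Finset.mem_filter.1 hq
      replace hq' := Finset.mem_filter.1 hq'
      simp only [Finset.coe_filter, Set.mem_setOf_eq, Finset.mem_coe, mem_filter, phi] at hq hq'
      have hb : (q.1, q.2.2) = (q'.1, q'.2.2) := h
      have h1 : q.1 = q'.1 := (Prod.ext_iff.1 hb).1
      have h2 : q.2.2 = q'.2.2 := (Prod.ext_iff.1 hb).2
      have e1 := hq.2
      have e2 := hq'.2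
      refine Prod.ext h1 (Prod.ext ?_ h2)
      have h3 : q.1.1 = q'.1.1 := (Prod.ext_iff.1 h1).1
      have h4 : q.1.2 = q'.1.2 := (Prod.ext_iff.1 h1).2
      rw [← h3, ← h4, ← h2] at e2
      linarith)
  calc Q x A B ≤ ((A ×ˢ B) ×ˢ B).card := this
    _ = (A.card * B.card) * B.card := by rw [card_product, card_product]

lemma Q_le_mul_a (x : ℝ) (hx : x ≠ 0) (A B : Finset ℝ) :
    Q x A B ≤ (A.card * B.card) * A.card := by
  have := card_le_card_of_injOn (fun q : (ℝ × ℝ) × (ℝ × ℝ) => (q.1, q.2.1))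
    (s := ((A ×ˢ B) ×ˢ (A ×ˢ B)).filter (fun q => phi x q.1 = phi x q.2)) (t := (A ×ˢ B) ×ˢ A)
    (fun q hq => by
      simp only [Finset.mem_coe, mem_filter, mem_product] at hq
      exact mem_product.2 ⟨mem_product.2 ⟨hq.1.1.1, hq.1.1.2⟩, hq.1.2.1⟩)
    (by
      intro q hq q' hq' h
      replace hq := Finset.mem_filter.1 hq
      replace hq' := Finset.mem_filter.1 hq'
      simp only [Finset.coe_filter, Set.mem_setOf_eq, Finset.mem_coe, mem_filter, phi] at hq hq'
      have hb : (q.1, q.2.1) = (q'.1, q'.2.1) := h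
      have h1 : q.1 = q'.1 := (Prod.ext_iff.1 hb).1
      have h2 : q.2.1 = q'.2.1 := (Prod.ext_iff.1 hb).2
      have e1 := hq.2
      have e2 := hq'.2
      refine Prod.ext h1 (Prod.ext h2 ?_)
      have h3 : q.1.1 = q'.1.1 := (Prod.ext_iff.1 h1).1
      have h4 : q.1.2 = q'.1.2 := (Prod.ext_iff.1 h1).2
      rw [← h3, ← h4, ← h2] at e2
      have h5 : x * q.2.2 = x * q'.2.2 := by linarith
      exact mul_left_cancel₀ hx h5)
  calc Q x A B ≤ ((A ×ˢ B) ×ˢ A).card := this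
    _ = (A.card * B.card) * A.card := by rw [card_product, card_product]

lemma red (x : ℝ) (A B : Finset ℝ) :
    (((A ×ˢ (B.image (fun b => x * b))) ×ˢ (A ×ˢ (B.image (fun b => x * b)))).filter
        (fun q => q.1.1 + q.1.2 = q.2.1 + q.2.2)).card ≤ Q x A B := by
  classical
  apply card_le_card_of_surjOn
    (fun q : (ℝ × ℝ) × (ℝ × ℝ) => ((q.1.1, x * q.1.2), (q.2.1, x * q.2.2)))
  intro y hy
  simp only [Finset.coe_filter, Set.mem_setOf_eq, mem_product, mem_image] at hy
  obtain ⟨⟨⟨hy11, b1, hb1, hc1⟩, hy21, b2, hb2, hc2⟩, heq⟩ := hy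
  refine ⟨((y.1.1, b1), (y.2.1, b2)), ?_, ?_⟩
  · refine Finset.mem_coe.2 (Finset.mem_filter.2 ?_)
    simp only [Finset.coe_filter, Set.mem_setOf_eq, Finset.mem_coe, mem_filter, mem_product, phi]
    refine ⟨⟨⟨hy11, hb1⟩, hy21, hb2⟩, ?_⟩
    rw [hc1, hc2]
    exact heq
  · simp only
    rw [hc1, hc2]

lemma e_zero_le (A B : Finset ℝ) :
    (((A ×ˢ (B.image (fun b => (0:ℝ) * b))) ×ˢ (A ×ˢ (B.image (fun b => (0:ℝ) * b)))).filter
        (fun q => q.1.1 + q.1.2 = q.2.1 + q.2.2)).card ≤ A.card := by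
  classical
  apply card_le_card_of_injOn (fun q : (ℝ × ℝ) × (ℝ × ℝ) => q.1.1)
  · intro q hq
    simp only [Finset.mem_coe, mem_filter, mem_product] at hq
    exact hq.1.1.1
  · intro q hq q' hq' h
    simp only [Finset.coe_filter, Set.mem_setOf_eq, Finset.mem_coe, mem_filter, mem_product, mem_image] at hq hq'
    obtain ⟨⟨⟨_, b1, _, hc1⟩, _, b2, _, hc2⟩, he⟩ := hq
    obtain ⟨⟨⟨_, b1', _, hc1'⟩, _, b2', _, hc2'⟩, he'⟩ := hq'
    have z1 : q.1.2 = 0 := by rw [← hc1]; ring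
    have z2 : q.2.2 = 0 := by rw [← hc2]; ring
    have z1' : q'.1.2 = 0 := by rw [← hc1']; ring
    have z2' : q'.2.2 = 0 := by rw [← hc2']; ring
    have h' : q.1.1 = q'.1.1 := h
    refine Prod.ext (Prod.ext h' (z1.trans z1'.symm)) (Prod.ext ?_ (z2.trans z2'.symm))
    have : q.2.1 = q.1.1 := by rw [z1, z2] at he; linarith
    have h2 : q'.2.1 = q'.1.1 := by rw [z1', z2'] at he'; linarith
    rw [this, h2]
    exact h'

lemma core (A B S : Finset ℝ) (h0 : (0:ℝ) ∉ S) (hS : S.card ≤ A.card * B.card) :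
    ∃ K : ℕ, (∑ x ∈ S, Q x A B ≤ K)
      ∧ K^2 ≤ 400 * ((A.card * B.card)^3 * S.card) := by
  classical
  set a := A.card with ha
  set b := B.card with hb
  set n := a * b with hn
  set s := S.card with hs
  rcases le_or_gt (s * min a b) (max a b) with hcase | hcase
  · refine ⟨s * (n * min a b), ?_, ?_⟩
    · have hper : ∀ x ∈ S, Q x A B ≤ n * min a b := by
        intro x hx
        have hx0 : x ≠ 0 := fun h => h0 (h ▸ hx)
        rcases min_cases a b with ⟨hmeq, _⟩ | ⟨hmeq, _⟩
        · rw [hmeq]; exact Q_le_mul_a x hx0 A B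
        · rw [hmeq]; exact Q_le_mul_b x A B
      calc ∑ x ∈ S, Q x A B ≤ ∑ _x ∈ S, (n * min a b) := sum_le_sum hper
        _ = s * (n * min a b) := by rw [Finset.sum_const, smul_eq_mul]
    · have h1 : s * min a b * min a b ≤ n := by
        calc s * min a b * min a b ≤ max a b * min a b := Nat.mul_le_mul_right _ hcase
          _ = min a b * max a b := Nat.mul_comm _ _
          _ = a * b := min_mul_max a b
      calc (s * (n * min a b))^2 = (n^2 * s) * (s * min a b * min a b) := by ring
        _ ≤ (n^2 * s) * n := Nat.mul_le_mul_left _ h1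
        _ = (n^3 * s) := by ring
        _ ≤ 400 * (n^3 * s) := Nat.le_mul_of_pos_left _ (by norm_num)
  · have hpos : 0 < s * min a b := lt_of_le_of_lt (Nat.zero_le _) hcase
    have hs0 : 0 < s := Nat.pos_of_ne_zero (fun h => by simp [h] at hpos)
    have hm0 : 0 < min a b := Nat.pos_of_ne_zero (fun h => by simp [h] at hpos)
    have ha0 : 0 < a := lt_of_lt_of_le hm0 (min_le_left a b)
    have hb0 : 0 < b := lt_of_lt_of_le hm0 (min_le_right a b)
    set t := n / s with ht
    set r := t.sqrt + 1 with hr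
    have hr0 : 0 < r := Nat.succ_pos _
    have hts : 1 ≤ t := (Nat.one_le_div_iff hs0).2 hS
    have hrmin : r ≤ min a b := by
      have hmm : min a b * max a b = a * b := min_mul_max a b
      have h3 : n < s * (min a b * min a b) := by
        calc n = (a ⊓ b) * (a ⊔ b) := by rw [hmm, ← hn]
          _ < (a ⊓ b) * (s * (a ⊓ b)) := mul_lt_mul_of_pos_left hcase hm0
          _ = s * (min a b * min a b) := by ring
      have h4 : t < (min a b)^2 := by
        rw [ht, Nat.div_lt_iff_lt_mul hs0]
        calc n < s * (min a b * min a b) := h3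
          _ = (min a b)^2 * s := by ring
      have h5 : t.sqrt < min a b := Nat.sqrt_lt'.2 h4
      omega
    have hra : r ≤ a := le_trans hrmin (min_le_left a b)
    have hrb : r ≤ b := le_trans hrmin (min_le_right a b)
    obtain ⟨u, hu, huA, huk⟩ := blocks A r hr0
    obtain ⟨v, hv, hvB, hvk⟩ := blocks B r hr0
    set kA := A.card / r + 1 with hkA
    set kB := B.card / r + 1 with hkB
    set F : ℕ → ℕ := fun i => (A.filter (fun y => u y = i)).card with hF
    set G : ℕ → ℕ := fun j => (B.filter (fun y => v y = j)).card with hG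
    have hsumA : ∑ i ∈ range r, F i = a := by
      rw [ha]
      exact (card_eq_sum_card_fiberwise (fun y hy => mem_range.2 (huA y hy))).symm
    have hsumB : ∑ j ∈ range r, G j = b := by
      rw [hb]
      exact (card_eq_sum_card_fiberwise (fun y hy => mem_range.2 (hvB y hy))).symm
    have hsqA : ∑ i ∈ range r, (F i)^2 ≤ kA * a := by
      calc ∑ i ∈ range r, (F i)^2 ≤ ∑ i ∈ range r, kA * F i := by
            refine sum_le_sum fun i _ => ?_
            rw [sq]
            exact Nat.mul_le_mul_right _ (huk i)
        _ = kA * ∑ i ∈ range r, F i := by rw [Finset.mul_sum]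
        _ = kA * a := by rw [hsumA]
    have hsqB : ∑ j ∈ range r, (G j)^2 ≤ kB * b := by
      calc ∑ j ∈ range r, (G j)^2 ≤ ∑ j ∈ range r, kB * G j := by
            refine sum_le_sum fun j _ => ?_
            rw [sq]
            exact Nat.mul_le_mul_right _ (hvk j)
        _ = kB * ∑ j ∈ range r, G j := by rw [Finset.mul_sum]
        _ = kB * b := by rw [hsumB]
    have main : ∑ x ∈ S, Q x A B ≤ 2*r*(s*n) + 2*r*((kA*a)*(kB*b)) := by
      have e1 : s * ((∑ i ∈ range r, F i) * (∑ j ∈ range r, G j))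
          = ∑ i ∈ range r, ∑ j ∈ range r, s * (F i * G j) := by
        rw [Finset.sum_mul_sum, Finset.mul_sum]
        exact Finset.sum_congr rfl fun i _ => by rw [Finset.mul_sum]
      have e2 : (∑ i ∈ range r, (F i)^2) * (∑ j ∈ range r, (G j)^2)
          = ∑ i ∈ range r, ∑ j ∈ range r, (F i * G j)^2 := by
        rw [Finset.sum_mul_sum]
        exact Finset.sum_congr rfl fun i _ =>
          Finset.sum_congr rfl fun j _ => (mul_pow _ _ 2).symm
      calc ∑ x ∈ S, Q x A B
          ≤ ∑ x ∈ S, 2 * r * ∑ i ∈ range r, ∑ j ∈ range r,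
              Q x (A.filter (fun y => u y = i)) (B.filter (fun y => v y = j)) :=
            sum_le_sum fun x _ => cells_bound x A B r u v hu hv huA hvB
        _ = 2 * r * ∑ i ∈ range r, ∑ j ∈ range r, ∑ x ∈ S,
              Q x (A.filter (fun y => u y = i)) (B.filter (fun y => v y = j)) := by
            rw [← Finset.mul_sum]
            congr 1
            rw [Finset.sum_comm]
            exact Finset.sum_congr rfl fun i _ => Finset.sum_comm
        _ ≤ 2 * r * ∑ i ∈ range r, ∑ j ∈ range r, (s * (F i * G j) + (F i * G j)^2) := by
            refine Nat.mul_le_mul_left _ (sum_le_sum fun i _ => sum_le_sum fun j _ => ?_)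
            exact sum_Q_le _ _ S
        _ = 2 * r * (s * ((∑ i ∈ range r, F i) * (∑ j ∈ range r, G j))
              + (∑ i ∈ range r, (F i)^2) * (∑ j ∈ range r, (G j)^2)) := by
            congr 1
            rw [e1, e2, ← Finset.sum_add_distrib]
            exact Finset.sum_congr rfl fun i _ => Finset.sum_add_distrib
        _ = 2 * r * (s * n + (∑ i ∈ range r, (F i)^2) * (∑ j ∈ range r, (G j)^2)) := by
            rw [hsumA, hsumB, ← hn]
        _ ≤ 2 * r * (s * n + (kA*a)*(kB*b)) :=
            Nat.mul_le_mul_left _ (Nat.add_le_add_left (Nat.mul_le_mul hsqA hsqB) _)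
        _ = 2*r*(s*n) + 2*r*((kA*a)*(kB*b)) := by rw [Nat.mul_add]
    have hkar : kA * r ≤ 2 * a := by
      have h1 : a / r * r ≤ a := Nat.div_mul_le_self a r
      have h2 : kA * r = a / r * r + r := by rw [hkA, ← ha]; ring
      omega
    have hkbr : kB * r ≤ 2 * b := by
      have h1 : b / r * r ≤ b := Nat.div_mul_le_self b r
      have h2 : kB * r = b / r * r + r := by rw [hkB, ← hb]; ring
      omega
    have hnsr : n ≤ s * (r * r) := by
      have h1 : s * t + n % s = n := by rw [ht]; exact Nat.div_add_mod n s
      have h2 : n % s < s := Nat.mod_lt _ hs0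
      have h3 : t < r * r := by rw [hr]; exact Nat.lt_succ_sqrt t
      have h4 : s * (t + 1) ≤ s * (r * r) := Nat.mul_le_mul_left s h3
      have h5 : s * (t + 1) = s * t + s := by ring
      omega
    have hX : 2*r*((kA*a)*(kB*b)) ≤ 8 * (n * s * r) := by
      have h2 : 2 * r * ((kA*r)*(kB*r)) * (a*b) ≤ 2*r*((2*a)*(2*b))*(a*b) :=
        Nat.mul_le_mul_right _ (Nat.mul_le_mul_left _ (Nat.mul_le_mul hkar hkbr))
      have h4 : n * n ≤ n * (s * (r*r)) := Nat.mul_le_mul_left n hnsr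
      have key : (2*r*((kA*a)*(kB*b))) * (r*r) ≤ (8 * (n * s * r)) * (r * r) := by
        calc (2*r*((kA*a)*(kB*b))) * (r*r) = 2 * r * ((kA*r)*(kB*r)) * (a*b) := by ring
          _ ≤ 2*r*((2*a)*(2*b))*(a*b) := h2
          _ = 8 * r * (n * n) := by rw [hn]; ring
          _ ≤ 8 * r * (n * (s * (r*r))) := Nat.mul_le_mul_left _ h4
          _ = (8 * (n * s * r)) * (r * r) := by ring
      exact Nat.le_of_mul_le_mul_right key (Nat.mul_pos hr0 hr0)
    refine ⟨10 * (n * s * r), ?_, ?_⟩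
    · calc ∑ x ∈ S, Q x A B ≤ 2*r*(s*n) + 2*r*((kA*a)*(kB*b)) := main
        _ ≤ 2*(n*s*r) + 8*(n*s*r) := Nat.add_le_add (le_of_eq (by ring)) hX
        _ = 10 * (n*s*r) := by ring
    · have h6 : r * r ≤ 4 * t := by
        have h7 : t.sqrt * t.sqrt ≤ t := Nat.sqrt_le t
        have h8 : t.sqrt ≤ t := Nat.sqrt_le_self t
        have h9 : r * r = t.sqrt * t.sqrt + 2 * t.sqrt + 1 := by rw [hr]; ring
        omega
      have h9 : s * t ≤ n := by
        rw [ht]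
        have := Nat.div_add_mod n s
        omega
      have h10 : s * (r * r) ≤ 4 * n := by
        calc s * (r*r) ≤ s * (4*t) := Nat.mul_le_mul_left s h6
          _ = 4 * (s*t) := by ring
          _ ≤ 4 * n := Nat.mul_le_mul_left 4 h9
      calc (10 * (n*s*r))^2 = 100 * ((n*n*s) * (s*(r*r))) := by ring
        _ ≤ 100 * ((n*n*s) * (4*n)) := Nat.mul_le_mul_left _ (Nat.mul_le_mul_left _ h10)
        _ = 400 * (n^3 * s) := by ring

end Stmt7

open Stmt7 in
theorem stmt7 : ∃ C > (0:ℝ), ∀ A B X : Finset ℝ, X.card ≤ A.card * B.card →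
    ∑ x ∈ X, ((((A ×ˢ (B.image (fun b => x * b))) ×ˢ
          (A ×ˢ (B.image (fun b => x * b)))).filter
        (fun q => q.1.1 + q.1.2 = q.2.1 + q.2.2)).card : ℝ) ≤
      C * Real.sqrt ((A.card : ℝ)^3 * (B.card : ℝ)^3 * (X.card : ℝ)) := by
  classical
  refine ⟨21, by norm_num, fun A B X hX => ?_⟩
  set f : ℝ → ℕ := fun x => (((A ×ˢ (B.image (fun b => x * b))) ×ˢ
          (A ×ˢ (B.image (fun b => x * b)))).filter
        (fun q => q.1.1 + q.1.2 = q.2.1 + q.2.2)).card with hf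
  show ∑ x ∈ X, (f x : ℝ) ≤ _
  set S := X.erase 0 with hSdef
  have h0S : (0:ℝ) ∉ S := Finset.notMem_erase _ _
  have hScard : S.card ≤ A.card * B.card := le_trans (card_le_card (erase_subset _ _)) hX
  obtain ⟨K, hK1, hK2⟩ := core A B S h0S hScard
  have hSK : ∑ x ∈ S, f x ≤ K := le_trans (sum_le_sum (fun x _ => red x A B)) hK1
  have hSKR : ∑ x ∈ S, (f x : ℝ) ≤ (K : ℝ) := by exact_mod_cast hSK
  set R := Real.sqrt ((A.card : ℝ)^3 * (B.card : ℝ)^3 * (X.card : ℝ)) with hR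
  have hR0 : 0 ≤ R := Real.sqrt_nonneg _
  have hKR : (K:ℝ) ≤ 20 * R := by
    have h1 : ((K:ℝ))^2 ≤ 400 * (((A.card : ℝ) * (B.card : ℝ))^3 * (S.card:ℝ)) := by
      exact_mod_cast hK2
    have h2 : (S.card:ℝ) ≤ (X.card:ℝ) := by
      exact_mod_cast card_le_card (erase_subset (0:ℝ) X)
    have h3 : ((K:ℝ))^2 ≤ 400 * ((A.card:ℝ)^3 * (B.card:ℝ)^3 * (X.card:ℝ)) := by
      have e : ((A.card : ℝ) * (B.card : ℝ))^3 = (A.card:ℝ)^3 * (B.card:ℝ)^3 := by ring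
      rw [e] at h1
      have h4 : (A.card:ℝ)^3 * (B.card:ℝ)^3 * (S.card:ℝ)
          ≤ (A.card:ℝ)^3 * (B.card:ℝ)^3 * (X.card:ℝ) := by
        have : (0:ℝ) ≤ (A.card:ℝ)^3 * (B.card:ℝ)^3 := by positivity
        exact mul_le_mul_of_nonneg_left h2 this
      linarith
    calc (K:ℝ) = Real.sqrt ((K:ℝ)^2) := (Real.sqrt_sq (Nat.cast_nonneg K)).symm
      _ ≤ Real.sqrt (400 * ((A.card:ℝ)^3 * (B.card:ℝ)^3 * (X.card:ℝ))) := Real.sqrt_le_sqrt h3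
      _ = 20 * R := by
          rw [show (400:ℝ) = 20^2 by norm_num, hR,
            Real.sqrt_mul (by positivity : (0:ℝ) ≤ (20:ℝ)^2),
            Real.sqrt_sq (by norm_num : (0:ℝ) ≤ (20:ℝ))]
  by_cases h0X : (0:ℝ) ∈ X
  · have hsplit : ∑ x ∈ X, (f x : ℝ) = ∑ x ∈ S, (f x : ℝ) + (f 0 : ℝ) := by
      rw [hSdef]
      exact (Finset.sum_erase_add X _ h0X).symm
    have hX1 : 1 ≤ X.card := card_pos.2 ⟨0, h0X⟩
    have hab1 : 1 ≤ A.card * B.card := le_trans hX1 hX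
    have ha1 : 1 ≤ A.card := Nat.pos_of_ne_zero (fun h => by simp [h] at hab1)
    have hb1 : 1 ≤ B.card := Nat.pos_of_ne_zero (fun h => by simp [h] at hab1)
    have haR : (A.card : ℝ) ≤ R := by
      have hsq : (A.card)^2 ≤ A.card^3 * B.card^3 * X.card := by
        calc (A.card)^2 = A.card^2 * 1 := (Nat.mul_one _).symm
          _ ≤ A.card^2 * (A.card * (B.card^3 * X.card)) := by
              refine Nat.mul_le_mul_left _ ?_
              have h5 : 1 ≤ B.card^3 * X.card := Nat.mul_le_mul (Nat.one_le_pow _ _ hb1) hX1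
              calc 1 = 1 * 1 := rfl
                _ ≤ A.card * (B.card^3 * X.card) := Nat.mul_le_mul ha1 h5
          _ = A.card^3 * B.card^3 * X.card := by ring
      have hsqR : ((A.card:ℝ))^2 ≤ (A.card:ℝ)^3 * (B.card:ℝ)^3 * (X.card:ℝ) := by
        exact_mod_cast hsq
      calc (A.card:ℝ) = Real.sqrt ((A.card:ℝ)^2) := (Real.sqrt_sq (Nat.cast_nonneg _)).symm
        _ ≤ R := Real.sqrt_le_sqrt hsqR
    have hf0 : (f 0 : ℝ) ≤ (A.card : ℝ) := by exact_mod_cast e_zero_le A B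
    calc ∑ x ∈ X, (f x : ℝ) = ∑ x ∈ S, (f x : ℝ) + (f 0 : ℝ) := hsplit
      _ ≤ (K:ℝ) + (A.card:ℝ) := add_le_add hSKR hf0
      _ ≤ 20 * R + R := add_le_add hKR haR
      _ = 21 * R := by ring
  · have hSX : S = X := by rw [hSdef]; exact erase_eq_of_notMem h0X
    calc ∑ x ∈ X, (f x : ℝ) = ∑ x ∈ S, (f x : ℝ) := by rw [hSX]
      _ ≤ (K:ℝ) := hSKR
      _ ≤ 20 * R := hKR
      _ ≤ 21 * R := by linarith
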